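/- Let λ be a nonzero real number, let E_n be the Euler numbers, E_n^{(i)} the higher-order Euler numbers, S₁(n,k) the signed Stirling numbers of the first kind, and a_k(N;λ) the recursively defined coefficients. Then for every integer N ≥ 1 and every integer k ≥ 0 one has (1/2)·Σ_{n=0}^{k+N} E_n·λ^n·S₁(k+N,n) = (−1)^N·λ·Σ_{i=1}^{N+1} a_{i−1}(N;λ)·Σ_{l=0}^{k} C(k,l)·(−1)^l·(N+l−1)_l·Σ_{n=0}^{k−l} 2^{−i}·E_n^{(i)}·λ^n·S₁(k−l,n), where C(k,l) is the binomial coefficient and (N+l−1)_l = (N+l−1)(N+l−2)···N is the falling factorial of length l. -/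

import Mathlib

open Filter Set Polynomial


open Filter Set Polynomial

/-- Transfer: if `Φ 0` agrees with `h` on `Ioi (-1)` and `Φ` satisfies the derivative
recursion there, then `iteratedDeriv m h = Φ m` on `Ioi (-1)`. -/
lemma iter_formula {h : ℝ → ℝ} {Φ : ℕ → ℝ → ℝ}
    (h0 : ∀ t : ℝ, -1 < t → Φ 0 t = h t)
    (hstep : ∀ m : ℕ, ∀ t : ℝ, -1 < t → HasDerivAt (Φ m) (Φ (m+1) t) t) :
    ∀ m : ℕ, ∀ t : ℝ, -1 < t → iteratedDeriv m h t = Φ m t := by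
  intro m
  induction m with
  | zero => intro t ht; simp [iteratedDeriv_zero, h0 t ht]
  | succ m ih =>
    intro t ht
    have hev : iteratedDeriv m h =ᶠ[nhds t] Φ m := by
      filter_upwards [isOpen_Ioi.mem_nhds (show t ∈ Ioi (-1:ℝ) from ht)] with s hs
      exact ih s hs
    rw [iteratedDeriv_succ, hev.deriv_eq, (hstep m t ht).deriv]

lemma iter_nice {h : ℝ → ℝ} {Φ : ℕ → ℝ → ℝ}
    (h0 : ∀ t : ℝ, -1 < t → Φ 0 t = h t)
    (hstep : ∀ m : ℕ, ∀ t : ℝ, -1 < t → HasDerivAt (Φ m) (Φ (m+1) t) t) :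
    ∀ m : ℕ, ∀ t : ℝ, -1 < t →
      HasDerivAt (iteratedDeriv m h) (iteratedDeriv (m+1) h t) t := by
  intro m t ht
  have hev : iteratedDeriv m h =ᶠ[nhds t] Φ m := by
    filter_upwards [isOpen_Ioi.mem_nhds (show t ∈ Ioi (-1:ℝ) from ht)] with s hs
    exact iter_formula h0 hstep m s hs
  have := (hstep m t ht).congr_of_eventuallyEq hev
  rwa [iter_formula h0 hstep (m+1) t ht]

/-- splitting iterated derivatives -/
lemma iter_split (f : ℝ → ℝ) (N : ℕ) : ∀ k : ℕ, iteratedDeriv (k + N) f = iteratedDeriv k (iteratedDeriv N f) := by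
  intro k
  induction k with
  | zero => simp
  | succ k ih =>
    have : k + 1 + N = (k + N) + 1 := by omega
    rw [this, iteratedDeriv_succ, ih, ← iteratedDeriv_succ]

/-- derivative of `(1+s)⁻¹ ^ M` -/
lemma hasDerivAt_invpow (M : ℕ) {t : ℝ} (ht : -1 < t) :
    HasDerivAt (fun s : ℝ => ((1+s)⁻¹) ^ M) (-(M:ℝ) * ((1+t)⁻¹) ^ (M+1)) t := by
  have h0 : (1 + t) ≠ 0 := by linarith
  have h1 : HasDerivAt (fun s : ℝ => 1 + s) 1 t := by
    simpa using (hasDerivAt_id t).const_add (1:ℝ)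
  have h2 : HasDerivAt (fun s : ℝ => (1+s)⁻¹) (-1 / (1+t)^2) t := by
    simpa using h1.fun_inv h0
  have h3 := h2.fun_pow M
  refine h3.congr_deriv (Eq.symm ?_)
  cases M with
  | zero => simp
  | succ M =>
    simp only [Nat.add_sub_cancel, neg_div, one_div, ← inv_pow]
    push_cast
    ring

noncomputable def cS (m n : ℕ) : ℝ := (descPochhammer ℝ m).coeff n

lemma cS00 : cS 0 0 = 1 := by simp [cS]

lemma cS_rec0 (m : ℕ) : cS (m+1) 0 = -(m:ℝ) * cS m 0 := by
  simp only [cS, descPochhammer_succ_right]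
  rw [mul_sub, coeff_sub, ← C_eq_natCast, coeff_mul_C]
  simp [mul_comm]

lemma cS_rec (m n : ℕ) : cS (m+1) (n+1) = cS m n - (m:ℝ) * cS m (n+1) := by
  simp only [cS, descPochhammer_succ_right]
  rw [mul_sub, coeff_sub, coeff_mul_X, ← C_eq_natCast, coeff_mul_C]
  ring

lemma cS_top (m : ℕ) : cS m (m+1) = 0 := by
  apply coeff_eq_zero_of_natDegree_lt
  simp

lemma sumA (m : ℕ) (lam : ℝ) (ψ : ℕ → ℝ) :
    ∑ n ∈ Finset.range (m+2), cS (m+1) n * lam ^ n * ψ n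
      = lam * ∑ n ∈ Finset.range (m+1), cS m n * lam ^ n * ψ (n+1)
        - (m:ℝ) * ∑ n ∈ Finset.range (m+1), cS m n * lam ^ n * ψ n := by
  rw [Finset.sum_range_succ' _ (m+1)]
  have e1 : ∀ n ∈ Finset.range (m+1), cS (m+1) (n+1) * lam ^ (n+1) * ψ (n+1)
      = cS m n * lam ^ (n+1) * ψ (n+1) - (m:ℝ) * (cS m (n+1) * lam ^ (n+1) * ψ (n+1)) := by
    intro n _; rw [cS_rec]; ring
  rw [Finset.sum_congr rfl e1, Finset.sum_sub_distrib, cS_rec0]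
  have e2 : (m:ℝ) * ∑ n ∈ Finset.range (m+1), cS m n * lam ^ n * ψ n
      = (∑ n ∈ Finset.range (m+1), (m:ℝ) * (cS m (n+1) * lam ^ (n+1) * ψ (n+1)))
        + (m:ℝ) * cS m 0 * lam ^ 0 * ψ 0 := by
    rw [Finset.mul_sum]
    rw [Finset.sum_range_succ' (fun n => (m:ℝ) * (cS m n * lam ^ n * ψ n)) m]
    have : cS m (m+1) = 0 := cS_top m
    rw [Finset.sum_range_succ]
    simp [this]
    ring
  have e3 : lam * ∑ n ∈ Finset.range (m+1), cS m n * lam ^ n * ψ (n+1)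
      = ∑ n ∈ Finset.range (m+1), cS m n * lam ^ (n+1) * ψ (n+1) := by
    rw [Finset.mul_sum]; apply Finset.sum_congr rfl; intro n _; ring
  rw [e3, e2]; ring
noncomputable def PhiA (lam : ℝ) (F : ℝ → ℝ) (m : ℕ) (t : ℝ) : ℝ :=
  ((1+t)⁻¹)^m * ∑ n ∈ Finset.range (m+1),
    cS m n * lam^n * iteratedDeriv n F (lam * Real.log (1+t))

lemma hasDerivAt_inner (lam : ℝ) {t : ℝ} (ht : -1 < t) :
    HasDerivAt (fun s : ℝ => lam * Real.log (1+s)) (lam * (1+t)⁻¹) t := by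
  have h0 : (1 + t) ≠ 0 := by linarith
  have h1 : HasDerivAt (fun s : ℝ => 1 + s) 1 t := by
    simpa using (hasDerivAt_id t).const_add (1:ℝ)
  have h2 : HasDerivAt (fun s : ℝ => Real.log (1+s)) ((1+t)⁻¹) t := by
    have := (Real.hasDerivAt_log h0).comp t h1; rw [mul_one] at this; exact this
  exact h2.const_mul lam

lemma psiA (F : ℝ → ℝ) (hF : ContDiff ℝ ⊤ F) (lam : ℝ) (n : ℕ) {t : ℝ} (ht : -1 < t) :
    HasDerivAt (fun s : ℝ => iteratedDeriv n F (lam * Real.log (1+s)))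
      (iteratedDeriv (n+1) F (lam * Real.log (1+t)) * (lam * (1+t)⁻¹)) t := by
  have hd : DifferentiableAt ℝ (iteratedDeriv n F) (lam * Real.log (1+t)) :=
    (hF.differentiable_iteratedDeriv n (by simp)).differentiableAt
  have h1 : HasDerivAt (iteratedDeriv n F)
      (iteratedDeriv (n+1) F (lam * Real.log (1+t))) (lam * Real.log (1+t)) := by
    rw [iteratedDeriv_succ]; exact hd.hasDerivAt
  exact h1.comp t (hasDerivAt_inner lam ht)

lemma stepA (F : ℝ → ℝ) (hF : ContDiff ℝ ⊤ F) (lam : ℝ) (m : ℕ) {t : ℝ} (ht : -1 < t) :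
    HasDerivAt (PhiA lam F m) (PhiA lam F (m+1) t) t := by
  set u := lam * Real.log (1+t) with hu
  set y := (1+t)⁻¹ with hy
  have hsum : HasDerivAt
      (fun s : ℝ => ∑ n ∈ Finset.range (m+1),
        cS m n * lam^n * iteratedDeriv n F (lam * Real.log (1+s)))
      (∑ n ∈ Finset.range (m+1),
        cS m n * lam^n * (iteratedDeriv (n+1) F u * (lam * y))) t := by
    apply HasDerivAt.fun_sum
    intro n _
    exact (psiA F hF lam n ht).const_mul (cS m n * lam ^ n)
  have hprod := (hasDerivAt_invpow m ht).mul hsum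
  have : HasDerivAt (PhiA lam F m)
      (-(m:ℝ) * y ^ (m+1) * (∑ n ∈ Finset.range (m+1), cS m n * lam^n * iteratedDeriv n F u)
        + y ^ m * ∑ n ∈ Finset.range (m+1),
            cS m n * lam^n * (iteratedDeriv (n+1) F u * (lam * y))) t := by
    exact hprod
  convert this using 1
  rw [PhiA]
  rw [sumA m lam (fun n => iteratedDeriv n F u)]
  have e : ∑ n ∈ Finset.range (m+1), cS m n * lam^n * (iteratedDeriv (n+1) F u * (lam * y))
      = (lam * y) * ∑ n ∈ Finset.range (m+1), cS m n * lam^n * iteratedDeriv (n+1) F u := by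
    rw [Finset.mul_sum]; apply Finset.sum_congr rfl; intro n _; ring
  rw [e]; ring

lemma h0A (F : ℝ → ℝ) (lam : ℝ) (t : ℝ) :
    PhiA lam F 0 t = F (lam * Real.log (1+t)) := by
  simp [PhiA, cS00]

lemma formulaA (F : ℝ → ℝ) (hF : ContDiff ℝ ⊤ F) (lam : ℝ) :
    ∀ m : ℕ, ∀ t : ℝ, -1 < t →
      iteratedDeriv m (fun s : ℝ => F (lam * Real.log (1+s))) t = PhiA lam F m t := by
  apply iter_formula
  · intro t ht; exact h0A F lam t
  · intro m t ht; exact stepA F hF lam m ht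

lemma niceA (F : ℝ → ℝ) (hF : ContDiff ℝ ⊤ F) (lam : ℝ) :
    ∀ m : ℕ, ∀ t : ℝ, -1 < t →
      HasDerivAt (iteratedDeriv m (fun s : ℝ => F (lam * Real.log (1+s))))
        (iteratedDeriv (m+1) (fun s : ℝ => F (lam * Real.log (1+s))) t) t := by
  apply iter_nice
  · intro t ht; exact h0A F lam t
  · intro m t ht; exact stepA F hF lam m ht

noncomputable def PP (N l : ℕ) : ℝ := (descPochhammer ℝ l).eval ((N:ℝ)+(l:ℝ)-1)

lemma PP0 (N : ℕ) : PP N 0 = 1 := by simp [PP]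

lemma PPsucc (N l : ℕ) : PP N (l+1) = ((N:ℝ)+(l:ℝ)) * PP N l := by
  have hx : ((N:ℝ)+((l+1:ℕ):ℝ)-1) = (N:ℝ)+(l:ℝ) := by push_cast; ring
  rw [PP, descPochhammer_succ_left, eval_mul, eval_X, eval_comp, eval_sub, eval_X, eval_one, hx,
    PP]

lemma sumC (k N : ℕ) (y : ℝ) (D : ℕ → ℝ) :
    ∑ l ∈ Finset.range (k+2), (((k+1).choose l : ℝ) * (-1:ℝ)^l * PP N l) * (y^(N+l) * D (k+1-l))
      = ∑ l ∈ Finset.range (k+1), ((k.choose l : ℝ) * (-1:ℝ)^l * PP N l) *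
          (-((N:ℝ)+(l:ℝ)) * y^(N+l+1) * D (k-l) + y^(N+l) * D (k-l+1)) := by
  rw [Finset.sum_range_succ' _ (k+1)]
  have e1 : ∀ l ∈ Finset.range (k+1),
      (((k+1).choose (l+1) : ℝ) * (-1:ℝ)^(l+1) * PP N (l+1)) * (y^(N+(l+1)) * D (k+1-(l+1)))
      = ((k.choose l : ℝ) * (-1:ℝ)^l * PP N l) * (-((N:ℝ)+(l:ℝ)) * y^(N+l+1) * D (k-l))
        + ((k.choose (l+1) : ℝ) * (-1:ℝ)^(l+1) * PP N (l+1)) * (y^(N+l+1) * D (k-l)) := by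
    intro l _
    have hc : ((k+1).choose (l+1) : ℝ) = (k.choose l : ℝ) + (k.choose (l+1) : ℝ) := by
      rw [Nat.choose_succ_succ]; push_cast; ring
    have hs : k + 1 - (l + 1) = k - l := by omega
    rw [hc, hs, PPsucc]
    have : N + (l+1) = N + l + 1 := by omega
    rw [this]
    ring
  rw [Finset.sum_congr rfl e1, Finset.sum_add_distrib]
  have e2 : (∑ l ∈ Finset.range (k+1),
        ((k.choose (l+1) : ℝ) * (-1:ℝ)^(l+1) * PP N (l+1)) * (y^(N+l+1) * D (k-l)))
        + (((k+1).choose 0 : ℝ) * (-1:ℝ)^0 * PP N 0) * (y^(N+0) * D (k+1-0))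
      = ∑ l ∈ Finset.range (k+1),
          ((k.choose l : ℝ) * (-1:ℝ)^l * PP N l) * (y^(N+l) * D (k-l+1)) := by
    have e3 : ∀ l ∈ Finset.range (k+1),
        ((k.choose (l+1) : ℝ) * (-1:ℝ)^(l+1) * PP N (l+1)) * (y^(N+l+1) * D (k-l))
        = (fun l => ((k.choose l : ℝ) * (-1:ℝ)^l * PP N l) * (y^(N+l) * D (k+1-l))) (l+1) := by
      intro l _
      have hs : k + 1 - (l + 1) = k - l := by omega
      have hn : N + (l+1) = N + l + 1 := by omega
      simp only [hs, hn]
    rw [Finset.sum_congr rfl e3]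
    have e4 : (((k+1).choose 0 : ℝ) * (-1:ℝ)^0 * PP N 0) * (y^(N+0) * D (k+1-0))
        = (fun l => ((k.choose l : ℝ) * (-1:ℝ)^l * PP N l) * (y^(N+l) * D (k+1-l))) 0 := by
      simp
    rw [e4, ← Finset.sum_range_succ' (fun l => ((k.choose l : ℝ) * (-1:ℝ)^l * PP N l) * (y^(N+l) * D (k+1-l))) (k+1)]
    rw [Finset.sum_range_succ]
    simp only [Nat.choose_succ_self, Nat.cast_zero, zero_mul, mul_zero, zero_mul, add_zero]
    apply Finset.sum_congr rfl
    intro l hl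
    have : k + 1 - l = k - l + 1 := by
      rw [Finset.mem_range] at hl; omega
    rw [this]
  rw [add_assoc, e2, ← Finset.sum_add_distrib]
  apply Finset.sum_congr rfl
  intro l _
  ring
noncomputable def PhiC (N : ℕ) (h : ℝ → ℝ) (k : ℕ) (t : ℝ) : ℝ :=
  ∑ l ∈ Finset.range (k+1), ((k.choose l : ℝ) * (-1:ℝ)^l * PP N l) *
    (((1+t)⁻¹)^(N+l) * iteratedDeriv (k-l) h t)

lemma stepC (N : ℕ) (h : ℝ → ℝ)
    (hnice : ∀ m : ℕ, ∀ t : ℝ, -1 < t →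
      HasDerivAt (iteratedDeriv m h) (iteratedDeriv (m+1) h t) t)
    (k : ℕ) {t : ℝ} (ht : -1 < t) :
    HasDerivAt (PhiC N h k) (PhiC N h (k+1) t) t := by
  set y := (1+t)⁻¹ with hy
  have hsum : HasDerivAt (PhiC N h k)
      (∑ l ∈ Finset.range (k+1), ((k.choose l : ℝ) * (-1:ℝ)^l * PP N l) *
        ((-((N+l:ℕ):ℝ) * y^(N+l+1)) * iteratedDeriv (k-l) h t
          + y^(N+l) * iteratedDeriv (k-l+1) h t)) t := by
    apply HasDerivAt.fun_sum
    intro l _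
    exact ((hasDerivAt_invpow (N+l) ht).mul (hnice (k-l) t ht)).const_mul _
  convert hsum using 1
  rw [PhiC, ← hy, sumC k N y (fun m => iteratedDeriv m h t)]
  apply Finset.sum_congr rfl
  intro l _
  push_cast
  ring

section
variable (lam : ℝ) (a : ℕ → ℕ → ℝ)

lemma sumB
    (haTop : ∀ N : ℕ, 1 ≤ N → a 0 (N + 1) = ((N : ℝ) + lam) * a 0 N)
    (haBot : ∀ N : ℕ, 1 ≤ N → a (N + 1) (N + 1) = -(((N : ℝ) + 1) * lam) * a N N)
    (haMid : ∀ N : ℕ, 1 ≤ N → ∀ i : ℕ, 2 ≤ i → i ≤ N + 1 →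
      a (i - 1) (N + 1) =
        -(((i : ℝ) - 1) * lam) * a (i - 2) N + ((N : ℝ) + (i : ℝ) * lam) * a (i - 1) N)
    (N : ℕ) (hN : 1 ≤ N) (x : ℝ) :
    ∑ j ∈ Finset.range (N+2), a j (N+1) * x^(j+1)
      = (N:ℝ) * ∑ j ∈ Finset.range (N+1), a j N * x^(j+1)
        + lam * ∑ j ∈ Finset.range (N+1), ((j:ℝ)+1) * a j N * (x^(j+1) - x^(j+2)) := by
  have hR : (N:ℝ) * ∑ j ∈ Finset.range (N+1), a j N * x^(j+1)
        + lam * ∑ j ∈ Finset.range (N+1), ((j:ℝ)+1) * a j N * (x^(j+1) - x^(j+2))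
      = (∑ j ∈ Finset.range (N+1), ((N:ℝ) + ((j:ℝ)+1) * lam) * a j N * x^(j+1))
        - ∑ j ∈ Finset.range (N+1), lam * ((j:ℝ)+1) * a j N * x^(j+2) := by
    rw [Finset.mul_sum, Finset.mul_sum, ← Finset.sum_add_distrib, ← Finset.sum_sub_distrib]
    apply Finset.sum_congr rfl
    intro j _
    ring
  rw [hR]
  rw [Finset.sum_range_succ' (fun j => a j (N+1) * x^(j+1)) (N+1),
    Finset.sum_range_succ (fun j => a (j+1) (N+1) * x^(j+1+1)) N,
    Finset.sum_range_succ' (fun j => ((N:ℝ) + ((j:ℝ)+1) * lam) * a j N * x^(j+1)) N,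
    Finset.sum_range_succ (fun j => lam * ((j:ℝ)+1) * a j N * x^(j+2)) N]
  have h0 : a 0 (N+1) * x^(0+1) = ((N:ℝ) + ((0:ℕ):ℝ)+1*lam) * a 0 N * x^(0+1) := by
    rw [haTop N hN]; push_cast; ring
  have htop : a (N+1) (N+1) * x^(N+1+1) = -(lam * ((N:ℝ)+1) * a N N * x^(N+2)) := by
    rw [haBot N hN]; push_cast; ring
  have hmid : ∀ j ∈ Finset.range N,
      a (j+1) (N+1) * x^(j+1+1)
        = ((N:ℝ) + ((((j+1 : ℕ)) : ℝ) + 1) * lam) * a (j+1) N * x^(j+1+1)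
          - lam * ((j:ℝ)+1) * a j N * x^(j+2) := by
    intro j hj
    rw [Finset.mem_range] at hj
    have h2 : 2 ≤ j + 2 := by omega
    have h3 : j + 2 ≤ N + 1 := by omega
    have := haMid N hN (j+2) h2 h3
    have e1 : j + 2 - 1 = j + 1 := by omega
    have e2 : j + 2 - 2 = j := by omega
    rw [e1, e2] at this
    rw [this]
    push_cast
    ring
  rw [Finset.sum_congr rfl hmid, Finset.sum_sub_distrib]
  push_cast at h0 htop ⊢
  rw [htop]
  rw [h0]
  ring
end

noncomputable def qf (lam : ℝ) : ℝ → ℝ := fun t => (Real.exp (lam * Real.log (1+t)) + 1)⁻¹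

lemma hasDerivAt_inner' (lam : ℝ) {t : ℝ} (ht : -1 < t) :
    HasDerivAt (fun s : ℝ => lam * Real.log (1+s)) (lam * (1+t)⁻¹) t := by
  have h0 : (1 + t) ≠ 0 := by linarith
  have h1 : HasDerivAt (fun s : ℝ => 1 + s) 1 t := by
    simpa using (hasDerivAt_id t).const_add (1:ℝ)
  have h2 : HasDerivAt (fun s : ℝ => Real.log (1+s)) ((1+t)⁻¹) t := by
    have := (Real.hasDerivAt_log h0).comp t h1; rw [mul_one] at this; exact this
  exact h2.const_mul lam

lemma hasDerivAt_qf (lam : ℝ) {t : ℝ} (ht : -1 < t) :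
    HasDerivAt (qf lam) (-(lam * (1+t)⁻¹) * (qf lam t - (qf lam t)^2)) t := by
  have hex : HasDerivAt (fun s : ℝ => Real.exp (lam * Real.log (1+s)))
      (Real.exp (lam * Real.log (1+t)) * (lam * (1+t)⁻¹)) t :=
    (hasDerivAt_inner' lam ht).exp
  have hadd : HasDerivAt (fun s : ℝ => Real.exp (lam * Real.log (1+s)) + 1)
      (Real.exp (lam * Real.log (1+t)) * (lam * (1+t)⁻¹)) t := hex.add_const 1
  have hne : Real.exp (lam * Real.log (1+t)) + 1 ≠ 0 := by positivity
  have := hadd.fun_inv hne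
  refine this.congr_deriv (Eq.symm ?_)
  rw [qf]
  have h1t : (1+t) ≠ 0 := by linarith
  set w := Real.exp (lam * Real.log (1+t)) with hwdef
  field_simp
  ring

noncomputable def PhiB (lam : ℝ) (a : ℕ → ℕ → ℝ) (N : ℕ) (t : ℝ) : ℝ :=
  (-1:ℝ)^N * lam * (((1+t)⁻¹)^N * ∑ j ∈ Finset.range (N+1), a j N * (qf lam t)^(j+1))

lemma formulaB (lam : ℝ) (a : ℕ → ℕ → ℝ)
    (ha01 : a 0 1 = 1) (ha11 : a 1 1 = -1)
    (haTop : ∀ N : ℕ, 1 ≤ N → a 0 (N + 1) = ((N : ℝ) + lam) * a 0 N)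
    (haBot : ∀ N : ℕ, 1 ≤ N → a (N + 1) (N + 1) = -(((N : ℝ) + 1) * lam) * a N N)
    (haMid : ∀ N : ℕ, 1 ≤ N → ∀ i : ℕ, 2 ≤ i → i ≤ N + 1 →
      a (i - 1) (N + 1) =
        -(((i : ℝ) - 1) * lam) * a (i - 2) N + ((N : ℝ) + (i : ℝ) * lam) * a (i - 1) N) :
    ∀ N : ℕ, 1 ≤ N → ∀ t : ℝ, -1 < t →
      iteratedDeriv N (qf lam) t = PhiB lam a N t := by
  intro N hN
  induction N, hN using Nat.le_induction with
  | base =>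
    intro t ht
    rw [iteratedDeriv_one, (hasDerivAt_qf lam ht).deriv, PhiB]
    simp only [Finset.sum_range_succ, Finset.sum_range_zero, ha01, ha11]
    ring
  | succ N hN ih =>

    intro t ht
    rw [iteratedDeriv_succ]
    have hev : iteratedDeriv N (qf lam) =ᶠ[nhds t] PhiB lam a N := by
      filter_upwards [isOpen_Ioi.mem_nhds (show t ∈ Ioi (-1:ℝ) from ht)] with s hs
      exact ih s hs
    rw [hev.deriv_eq]
    set y := (1+t)⁻¹ with hy
    set q := qf lam t with hq
    set q' := -(lam * (1+t)⁻¹) * (qf lam t - (qf lam t)^2) with hq'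
    have hsum : HasDerivAt (fun s : ℝ => ∑ j ∈ Finset.range (N+1), a j N * (qf lam s)^(j+1))
        (∑ j ∈ Finset.range (N+1), a j N * ((((j:ℝ))+1) * q^j * q')) t := by
      apply HasDerivAt.fun_sum
      intro j _
      have := ((hasDerivAt_qf lam ht).fun_pow (j+1)).const_mul (a j N)
      refine this.congr_deriv (Eq.symm ?_)
      rw [hq', ← hq]
      try push_cast
      try ring
    have hprod := ((hasDerivAt_invpow N ht).mul hsum).const_mul ((-1:ℝ)^N * lam)
    have hB : HasDerivAt (PhiB lam a N)
        ((-1:ℝ)^N * lam * (-(N:ℝ) * y^(N+1) * (∑ j ∈ Finset.range (N+1), a j N * q^(j+1))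
          + y^N * ∑ j ∈ Finset.range (N+1), a j N * ((((j:ℝ))+1) * q^j * q'))) t := hprod
    rw [hB.deriv, PhiB]
    rw [sumB lam a haTop haBot haMid N hN q]
    have e : ∑ j ∈ Finset.range (N+1), a j N * ((((j:ℝ))+1) * q^j * q')
        = -(lam * y) * ∑ j ∈ Finset.range (N+1), ((j:ℝ)+1) * a j N * (q^(j+1) - q^(j+2)) := by
      rw [Finset.mul_sum]
      apply Finset.sum_congr rfl
      intro j _
      rw [hq', ← hy, ← hq]
      ring
    rw [e]
    ring

lemma formulaE (s : Finset ℕ) (c : ℕ → ℝ) (h : ℕ → ℝ → ℝ)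
    (hnice : ∀ i ∈ s, ∀ m : ℕ, ∀ t : ℝ, -1 < t →
      HasDerivAt (iteratedDeriv m (h i)) (iteratedDeriv (m+1) (h i) t) t) :
    ∀ m : ℕ, ∀ t : ℝ, -1 < t →
      iteratedDeriv m (fun x => ∑ i ∈ s, c i * h i x) t
        = ∑ i ∈ s, c i * iteratedDeriv m (h i) t := by
  apply iter_formula (Φ := fun m t => ∑ i ∈ s, c i * iteratedDeriv m (h i) t)
  · intro t ht; simp
  · intro m t ht
    exact HasDerivAt.fun_sum (fun i hi => ((hnice i hi m t ht).const_mul (c i)))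

lemma h0C (N : ℕ) (h : ℝ → ℝ) (t : ℝ) : PhiC N h 0 t = ((1+t)⁻¹)^N * h t := by
  simp [PhiC, PP0]

lemma formulaC (N : ℕ) (h : ℝ → ℝ)
    (hnice : ∀ m : ℕ, ∀ t : ℝ, -1 < t →
      HasDerivAt (iteratedDeriv m h) (iteratedDeriv (m+1) h t) t) :
    ∀ k : ℕ, ∀ t : ℝ, -1 < t →
      iteratedDeriv k (fun s => ((1+s)⁻¹)^N * h s) t = PhiC N h k t :=
  iter_formula (fun t ht => h0C N h t) (fun k t ht => stepC N h hnice k ht)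

lemma niceC (N : ℕ) (h : ℝ → ℝ)
    (hnice : ∀ m : ℕ, ∀ t : ℝ, -1 < t →
      HasDerivAt (iteratedDeriv m h) (iteratedDeriv (m+1) h t) t) :
    ∀ k : ℕ, ∀ t : ℝ, -1 < t →
      HasDerivAt (iteratedDeriv k (fun s => ((1+s)⁻¹)^N * h s))
        (iteratedDeriv (k+1) (fun s => ((1+s)⁻¹)^N * h s) t) t :=
  iter_nice (fun t ht => h0C N h t) (fun k t ht => stepC N h hnice k ht)

noncomputable def FF (i : ℕ) : ℝ → ℝ := fun t => ((Real.exp t + 1)⁻¹)^i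

lemma contDiff_FF (i : ℕ) : ContDiff ℝ ⊤ (FF i) :=
  ((Real.contDiff_exp.add contDiff_const).inv (fun x => by positivity)).pow i

lemma FF_comp (lam : ℝ) (i : ℕ) :
    (fun s : ℝ => FF i (lam * Real.log (1+s))) = fun s : ℝ => qf lam s ^ i := rfl

lemma qf_pow_one (lam : ℝ) : (fun s : ℝ => qf lam s ^ 1) = qf lam :=
  funext fun s => pow_one _

lemma formulaA_zero (F : ℝ → ℝ) (hF : ContDiff ℝ ⊤ F) (lam : ℝ) (m : ℕ) :
    iteratedDeriv m (fun s : ℝ => F (lam * Real.log (1+s))) 0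
      = ∑ n ∈ Finset.range (m+1), cS m n * lam^n * iteratedDeriv n F 0 := by
  rw [formulaA F hF lam m 0 (by norm_num)]
  simp [PhiA]

lemma formulaC_zero (N : ℕ) (h : ℝ → ℝ)
    (hnice : ∀ m : ℕ, ∀ t : ℝ, -1 < t →
      HasDerivAt (iteratedDeriv m h) (iteratedDeriv (m+1) h t) t) (k : ℕ) :
    iteratedDeriv k (fun s => ((1+s)⁻¹)^N * h s) 0
      = ∑ l ∈ Finset.range (k+1),
          ((k.choose l : ℝ) * (-1:ℝ)^l * PP N l) * iteratedDeriv (k-l) h 0 := by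
  rw [formulaC N h hnice k 0 (by norm_num)]
  simp [PhiC]

lemma S1_eq_cS (S1 : ℕ → ℕ → ℝ)
    (hS1 : ∀ (n : ℕ) (x : ℝ),
      (descPochhammer ℝ n).eval x = ∑ k ∈ Finset.range (n + 1), S1 n k * x ^ k)
    (m n : ℕ) (hn : n < m + 1) : S1 m n = cS m n := by
  have hpoly : descPochhammer ℝ m = ∑ j ∈ Finset.range (m+1), C (S1 m j) * X^j := by
    apply Polynomial.funext
    intro x
    rw [hS1]
    simp [eval_finset_sum]
  rw [cS, hpoly, finset_sum_coeff]
  simp only [coeff_C_mul, coeff_X_pow, mul_ite, mul_one, mul_zero]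
  rw [Finset.sum_ite_eq (Finset.range (m+1)) n (fun j => S1 m j)]
  rw [if_pos (Finset.mem_range.mpr hn)]

lemma iteratedDeriv_cmul (c : ℝ) (f : ℝ → ℝ) (hf : ContDiff ℝ ⊤ f) (n : ℕ) (x : ℝ) :
    iteratedDeriv n (fun t => c * f t) x = c * iteratedDeriv n f x := by
  rw [iteratedDeriv, iteratedDeriv,
    show (fun t => c * f t) = c • f from rfl,
    iteratedFDeriv_const_smul_apply (hf.of_le le_top).contDiffAt]
  simp

/-- (Theorem 4 of the paper.)  Let `λ ≠ 0`.  The Euler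
numbers `E n` are defined by `2/(eᵗ+1) = Σ E n · tⁿ/n!`, the higher-order
Euler numbers `Er i n` by `(2/(eᵗ+1))ⁱ = Σ Er i n · tⁿ/n!` for `i ≥ 1`, the
signed Stirling numbers of the first kind `S1 n k` by
`x(x-1)⋯(x-n+1) = Σ_{k=0}^{n} S1 n k · xᵏ`, and `a_k(N;λ)` are the
recursively defined coefficients.  Then for all `N ≥ 1` and `k ≥ 0`:
`(1/2)·Σ_{n=0}^{k+N} E n λⁿ S1 (k+N) n
  = (-1)^N λ Σ_{i=1}^{N+1} a_{i-1}(N;λ)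
      Σ_{l=0}^{k} C(k,l) (-1)ˡ (N+l-1)_l Σ_{n=0}^{k-l} 2⁻ⁱ Er i n λⁿ S1 (k-l) n`,
where `(N+l-1)_l` is the falling factorial (`descPochhammer`). -/
theorem euler_stirling_boole_identity (lam : ℝ) (hlam : lam ≠ 0)
    (E : ℕ → ℝ)
    (hE : ∀ n : ℕ, iteratedDeriv n (fun t : ℝ => 2 / (Real.exp t + 1)) 0 = E n)
    (Er : ℕ → ℕ → ℝ)
    (hEr : ∀ i : ℕ, 1 ≤ i → ∀ n : ℕ,
      iteratedDeriv n (fun t : ℝ => (2 / (Real.exp t + 1)) ^ i) 0 = Er i n)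
    (S1 : ℕ → ℕ → ℝ)
    (hS1 : ∀ (n : ℕ) (x : ℝ),
      (descPochhammer ℝ n).eval x = ∑ k ∈ Finset.range (n + 1), S1 n k * x ^ k)
    (a : ℕ → ℕ → ℝ)
    (ha00 : a 0 0 = 1 / lam) (ha01 : a 0 1 = 1) (ha11 : a 1 1 = -1)
    (haTop : ∀ N : ℕ, 1 ≤ N → a 0 (N + 1) = ((N : ℝ) + lam) * a 0 N)
    (haBot : ∀ N : ℕ, 1 ≤ N →
      a (N + 1) (N + 1) = -(((N : ℝ) + 1) * lam) * a N N)
    (haMid : ∀ N : ℕ, 1 ≤ N → ∀ i : ℕ, 2 ≤ i → i ≤ N + 1 →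
      a (i - 1) (N + 1) =
        -(((i : ℝ) - 1) * lam) * a (i - 2) N + ((N : ℝ) + (i : ℝ) * lam) * a (i - 1) N)
    (N : ℕ) (hN : 1 ≤ N) (k : ℕ) :
    (1 / 2 : ℝ) * ∑ n ∈ Finset.range (k + N + 1), E n * lam ^ n * S1 (k + N) n =
      (-1 : ℝ) ^ N * lam *
        ∑ i ∈ Finset.Icc 1 (N + 1), a (i - 1) N *
          ∑ l ∈ Finset.range (k + 1),
            (k.choose l : ℝ) * (-1 : ℝ) ^ l *
              (descPochhammer ℝ l).eval ((N : ℝ) + (l : ℝ) - 1) *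
              ∑ n ∈ Finset.range (k - l + 1),
                (2 : ℝ) ^ (-(i : ℤ)) * Er i n * lam ^ n * S1 (k - l) n := by
  -- identification of E and Er with iterated derivatives of FF
  have hFE : ∀ n : ℕ, iteratedDeriv n (FF 1) 0 = E n / 2 := by
    intro n
    have hfun : (fun t : ℝ => 2 / (Real.exp t + 1)) = fun t => 2 * FF 1 t := by
      funext t; simp [FF, div_eq_mul_inv]
    have h2 := hE n
    rw [hfun, iteratedDeriv_cmul 2 (FF 1) (contDiff_FF 1) n 0] at h2
    linarith
  have hFEr : ∀ i : ℕ, 1 ≤ i → ∀ n : ℕ,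
      iteratedDeriv n (FF i) 0 = (2:ℝ) ^ (-(i:ℤ)) * Er i n := by
    intro i hi n
    have hfun : (fun t : ℝ => (2 / (Real.exp t + 1)) ^ i) = fun t => 2^i * FF i t := by
      funext t; rw [FF, div_eq_mul_inv, mul_pow]
    have h2 := hEr i hi n
    rw [hfun, iteratedDeriv_cmul (2^i) (FF i) (contDiff_FF i) n 0] at h2
    have h2i : ((2:ℝ)^i) ≠ 0 := by positivity
    rw [← h2, zpow_neg, zpow_natCast]
    field_simp
  -- niceness of q^i and of g i
  have niceqi : ∀ i : ℕ, ∀ m : ℕ, ∀ t : ℝ, -1 < t →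
      HasDerivAt (iteratedDeriv m (fun s : ℝ => qf lam s ^ i))
        (iteratedDeriv (m+1) (fun s : ℝ => qf lam s ^ i) t) t := by
    intro i
    rw [← FF_comp lam i]
    exact niceA (FF i) (contDiff_FF i) lam
  set g : ℕ → ℝ → ℝ := fun i s => ((1+s)⁻¹)^N * qf lam s ^ i with hg
  have niceg : ∀ i : ℕ, ∀ m : ℕ, ∀ t : ℝ, -1 < t →
      HasDerivAt (iteratedDeriv m (g i)) (iteratedDeriv (m+1) (g i) t) t := by
    intro i
    exact niceC N _ (niceqi i)
  -- LHS = iteratedDeriv (k+N) (qf lam) 0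
  have hLHS : (1 / 2 : ℝ) * ∑ n ∈ Finset.range (k + N + 1), E n * lam ^ n * S1 (k + N) n
      = iteratedDeriv (k + N) (qf lam) 0 := by
    rw [← qf_pow_one lam, ← FF_comp lam 1, formulaA_zero (FF 1) (contDiff_FF 1) lam (k+N)]
    rw [Finset.mul_sum]
    apply Finset.sum_congr rfl
    intro n hn
    rw [Finset.mem_range] at hn
    rw [S1_eq_cS S1 hS1 (k+N) n hn, hFE n]
    ring
  -- key identity
  have key : iteratedDeriv (k + N) (qf lam) 0
      = ∑ i ∈ Finset.Icc 1 (N+1), ((-1:ℝ)^N * lam * a (i-1) N) * iteratedDeriv k (g i) 0 := by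
    rw [iter_split (qf lam) N k]
    have hev : iteratedDeriv N (qf lam) =ᶠ[nhds (0:ℝ)]
        (fun x => ∑ i ∈ Finset.Icc 1 (N+1), ((-1:ℝ)^N * lam * a (i-1) N) * g i x) := by
      filter_upwards [isOpen_Ioi.mem_nhds (show (0:ℝ) ∈ Ioi (-1:ℝ) by norm_num)] with s hs
      rw [formulaB lam a ha01 ha11 haTop haBot haMid N hN s hs, PhiB]
      have hIcc : Finset.Icc 1 (N+1) = Finset.Ico 1 (N+2) := by
        exact (Finset.Ico_add_one_right_eq_Icc 1 (N+1)).symm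
      rw [hIcc, Finset.sum_Ico_eq_sum_range]
      have hrange : N + 2 - 1 = N + 1 := by omega
      rw [hrange, Finset.mul_sum, Finset.mul_sum]
      apply Finset.sum_congr rfl
      intro j _
      have e1 : 1 + j - 1 = j := by omega
      have e2 : 1 + j = j + 1 := by omega
      simp only [hg, e1, e2, Nat.add_sub_cancel]
      ring
    rw [Filter.EventuallyEq.iteratedDeriv_eq k hev]
    exact formulaE (Finset.Icc 1 (N+1)) (fun i => (-1:ℝ)^N * lam * a (i-1) N) g
      (fun i _ => niceg i) k 0 (by norm_num)
  rw [hLHS, key, Finset.mul_sum]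
  apply Finset.sum_congr rfl
  intro i hi
  rw [Finset.mem_Icc] at hi
  -- inner sums: per i
  have hinner : ∀ l : ℕ, l < k + 1 →
      ∑ n ∈ Finset.range (k - l + 1), (2:ℝ)^(-(i:ℤ)) * Er i n * lam ^ n * S1 (k-l) n
        = iteratedDeriv (k-l) (fun s : ℝ => qf lam s ^ i) 0 := by
    intro l hl
    rw [← FF_comp lam i, formulaA_zero (FF i) (contDiff_FF i) lam (k-l)]
    apply Finset.sum_congr rfl
    intro n hn
    rw [Finset.mem_range] at hn
    rw [S1_eq_cS S1 hS1 (k-l) n hn, hFEr i hi.1 n]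
    ring
  have hC : iteratedDeriv k (g i) 0
      = ∑ l ∈ Finset.range (k+1),
          ((k.choose l : ℝ) * (-1:ℝ)^l * PP N l) * iteratedDeriv (k-l) (fun s : ℝ => qf lam s ^ i) 0 := by
    rw [hg]
    exact formulaC_zero N (fun s : ℝ => qf lam s ^ i) (niceqi i) k
  rw [hC]
  have e : (∑ l ∈ Finset.range (k+1),
        (k.choose l : ℝ) * (-1:ℝ)^l * (descPochhammer ℝ l).eval ((N:ℝ)+(l:ℝ)-1) *
          ∑ n ∈ Finset.range (k-l+1), (2:ℝ)^(-(i:ℤ)) * Er i n * lam^n * S1 (k-l) n)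
      = ∑ l ∈ Finset.range (k+1),
          ((k.choose l : ℝ) * (-1:ℝ)^l * PP N l) *
            iteratedDeriv (k-l) (fun s : ℝ => qf lam s ^ i) 0 := by
    apply Finset.sum_congr rfl
    intro l hl
    rw [Finset.mem_range] at hl
    rw [hinner l hl, PP]
  rw [e]
  ring
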